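/- For every α ≥ 2, the integral over ℝ² of (|y|^{α−2}/(1 + |y|^α)²)·((1 − |y|^α)/(1 + |y|^α)) with respect to Lebesgue measure equals 0. -/

import Mathlib

open MeasureTheory Real Finset

noncomputable def laplacian (f : EuclideanSpace ℝ (Fin 2) → ℝ) (x : EuclideanSpace ℝ (Fin 2)) : ℝ :=
  ∑ i : Fin 2, fderiv ℝ (fun y => fderiv ℝ f y (EuclideanSpace.single i 1)) x (EuclideanSpace.single i 1)

set_option maxHeartbeats 1000000 in
lemma one_dim_integral_zero (α : ℝ) (hα : 2 ≤ α) :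
    ∫ r in Set.Ioi (0:ℝ),
      r * (r ^ (α - 2) / (1 + r ^ α) ^ 2 * ((1 - r ^ α) / (1 + r ^ α))) = 0 := by
  have hαpos : (0:ℝ) < α := by linarith
  have hα2 : (0:ℝ) ≤ α - 2 := by linarith
  set F : ℝ → ℝ := fun r => α⁻¹ * ((1 + r ^ α)⁻¹ - ((1 + r ^ α) ^ 2)⁻¹) with hF
  set G : ℝ → ℝ := fun r =>
      r * (r ^ (α - 2) / (1 + r ^ α) ^ 2 * ((1 - r ^ α) / (1 + r ^ α))) with hG
  have hpos : ∀ r : ℝ, 0 ≤ r → 0 < 1 + r ^ α := fun r hr => by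
    have := Real.rpow_nonneg hr α; linarith
  -- derivative
  have hderiv : ∀ x ∈ Set.Ioi (0:ℝ), HasDerivAt F (G x) x := by
    intro x hx
    have hx0 : (0:ℝ) < x := hx
    have hne : (1 + x ^ α) ≠ 0 := (hpos x hx0.le).ne'
    have hg : HasDerivAt (fun r : ℝ => 1 + r ^ α) (α * x ^ (α - 1)) x := by
      simpa using ((Real.hasDerivAt_rpow_const (p := α) (Or.inl hx0.ne'))).const_add 1
    have h1 : HasDerivAt (fun r : ℝ => (1 + r ^ α)⁻¹)
        (-(α * x ^ (α - 1)) / (1 + x ^ α) ^ 2) x := hg.inv hne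
    have h2 : HasDerivAt (fun r : ℝ => ((1 + r ^ α) ^ 2)⁻¹)
        (-((2:ℕ) * (1 + x ^ α) ^ (2 - 1) * (α * x ^ (α - 1))) / ((1 + x ^ α) ^ 2) ^ 2) x :=
      (hg.pow 2).inv (pow_ne_zero _ hne)
    have h3 : HasDerivAt F (α⁻¹ * (-(α * x ^ (α - 1)) / (1 + x ^ α) ^ 2 -
        -((2:ℕ) * (1 + x ^ α) ^ (2 - 1) * (α * x ^ (α - 1))) / ((1 + x ^ α) ^ 2) ^ 2)) x :=
      ((h1.sub h2).const_mul α⁻¹)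
    convert h3 using 1
    have hB : x ^ (α - 1) = x ^ (α - 2) * x := by
      rw [show α - 1 = (α - 2) + 1 by ring, Real.rpow_add hx0, Real.rpow_one]
    simp only [hG, hB]
    field_simp
    ring
  -- continuity at 0 within Ici 0
  have hc0 : ContinuousWithinAt F (Set.Ici 0) 0 := by
    have hc : ContinuousAt (fun r : ℝ => 1 + r ^ α) 0 :=
      continuousAt_const.add (Real.continuousAt_rpow_const 0 α (Or.inr hαpos.le))
    have hne : (1 + (0:ℝ) ^ α) ≠ 0 := (hpos 0 le_rfl).ne'
    exact (continuousAt_const.mul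
      ((hc.inv₀ hne).sub ((hc.pow 2).inv₀ (pow_ne_zero _ hne)))).continuousWithinAt
  -- limit at infinity
  have htop : Filter.Tendsto F Filter.atTop (nhds 0) := by
    have h : Filter.Tendsto (fun r : ℝ => 1 + r ^ α) Filter.atTop Filter.atTop :=
      Filter.tendsto_atTop_add_const_left _ 1 (tendsto_rpow_atTop hαpos)
    have h1 : Filter.Tendsto (fun r : ℝ => (1 + r ^ α)⁻¹) Filter.atTop (nhds 0) :=
      h.inv_tendsto_atTop
    have h2 : Filter.Tendsto (fun r : ℝ => ((1 + r ^ α) ^ 2)⁻¹) Filter.atTop (nhds 0) := by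
      have := (h1.pow 2)
      simpa [inv_pow] using this
    have := ((h1.sub h2).const_mul α⁻¹)
    simpa using this
  -- integrability
  have hGcont : ContinuousOn G (Set.Ici 0) := by
    intro x hx
    have hne : (1 + x ^ α) ≠ 0 := (hpos x hx).ne'
    have hrp : ContinuousWithinAt (fun r : ℝ => r ^ α) (Set.Ici 0) x :=
      (Real.continuousAt_rpow_const x α (Or.inr hαpos.le)).continuousWithinAt
    have hrp2 : ContinuousWithinAt (fun r : ℝ => r ^ (α - 2)) (Set.Ici 0) x :=
      (Real.continuousAt_rpow_const x (α - 2) (Or.inr hα2)).continuousWithinAt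
    exact continuousWithinAt_id.mul
      (((hrp2.div ((continuousWithinAt_const.add hrp).pow 2)
          (pow_ne_zero _ hne)).mul
        ((continuousWithinAt_const.sub hrp).div
          (continuousWithinAt_const.add hrp) hne)))
  have hint : IntegrableOn G (Set.Ioi (0:ℝ)) := by
    have hint1 : IntegrableOn G (Set.Ioc (0:ℝ) 1) :=
      ((hGcont.mono (Set.Icc_subset_Ici_self : Set.Icc (0:ℝ) 1 ⊆ Set.Ici 0)).integrableOn_Icc).mono_set
        Set.Ioc_subset_Icc_self
    have hint2 : IntegrableOn G (Set.Ioi (1:ℝ)) := by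
      have hmaj : IntegrableOn (fun r : ℝ => r ^ (-α - 1)) (Set.Ioi (1:ℝ)) :=
        integrableOn_Ioi_rpow_of_lt (by linarith) one_pos
      refine Integrable.mono hmaj
        ((hGcont.mono (fun x (hx : x ∈ Set.Ioi (1:ℝ)) => (le_of_lt (lt_of_lt_of_le one_pos (le_of_lt (Set.mem_Ioi.mp hx))) : (0:ℝ) ≤ x))).aestronglyMeasurable
          measurableSet_Ioi) ?_
      · filter_upwards [ae_restrict_mem measurableSet_Ioi] with r hr
        have hr1 : (1:ℝ) < r := hr
        have hr0 : (0:ℝ) < r := lt_trans one_pos hr1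
        have hA : (0:ℝ) < r ^ α := Real.rpow_pos_of_pos hr0 α
        have h1A : (0:ℝ) < 1 + r ^ α := by linarith
        have habs : |1 - r ^ α| ≤ 1 + r ^ α := by
          rw [abs_le]; constructor <;> nlinarith
        have hB : r * r ^ (α - 2) = r ^ (α - 1) := by
          rw [show α - 1 = (α - 2) + 1 by ring, Real.rpow_add hr0, Real.rpow_one]; ring
        have hGabs : |G r| = r ^ (α - 1) * |1 - r ^ α| / (1 + r ^ α) ^ 3 := by
          simp only [hG]
          rw [abs_mul, abs_mul, abs_div, abs_div, abs_of_pos hr0,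
            abs_of_nonneg (Real.rpow_nonneg hr0.le _), abs_of_pos (pow_pos h1A 2),
            abs_of_pos h1A]
          field_simp [hB.symm]
          linear_combination |1 - r ^ α| * hB
        rw [Real.norm_eq_abs, Real.norm_eq_abs, hGabs,
          abs_of_nonneg (Real.rpow_nonneg hr0.le _)]
        have step1 : r ^ (α - 1) * |1 - r ^ α| / (1 + r ^ α) ^ 3
            ≤ r ^ (α - 1) * (1 + r ^ α) / (1 + r ^ α) ^ 3 := by
          apply div_le_div_of_nonneg_right ?_ (by positivity)
          · exact mul_le_mul_of_nonneg_left habs (Real.rpow_nonneg hr0.le _)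
        have step2 : r ^ (α - 1) * (1 + r ^ α) / (1 + r ^ α) ^ 3
            = r ^ (α - 1) / (1 + r ^ α) ^ 2 := by
          field_simp
        have step3 : r ^ (α - 1) / (1 + r ^ α) ^ 2 ≤ r ^ (α - 1) / (r ^ α) ^ 2 := by
          apply div_le_div_of_nonneg_left (Real.rpow_nonneg hr0.le _) (by positivity)
          · nlinarith
        have step4 : r ^ (α - 1) / (r ^ α) ^ 2 = r ^ (-α - 1) := by
          rw [← Real.rpow_natCast (r ^ α) 2, ← Real.rpow_mul hr0.le, ← Real.rpow_sub hr0]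
          norm_num
          ring_nf
        calc r ^ (α - 1) * |1 - r ^ α| / (1 + r ^ α) ^ 3
            ≤ r ^ (α - 1) * (1 + r ^ α) / (1 + r ^ α) ^ 3 := step1
          _ = r ^ (α - 1) / (1 + r ^ α) ^ 2 := step2
          _ ≤ r ^ (α - 1) / (r ^ α) ^ 2 := step3
          _ = r ^ (-α - 1) := step4
    have : Set.Ioi (0:ℝ) = Set.Ioc 0 1 ∪ Set.Ioi 1 := (Set.Ioc_union_Ioi_eq_Ioi (by norm_num)).symm
    rw [this]
    exact hint1.union hint2
  have := integral_Ioi_of_hasDerivAt_of_tendsto hc0 hderiv hint htop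
  rw [this, hF]
  have : (0:ℝ) ^ α = 0 := Real.zero_rpow hαpos.ne'
  simp [this]

theorem singular_kernel_integral_zero (α : ℝ) (hα : 2 ≤ α) :
    ∫ y : EuclideanSpace ℝ (Fin 2),
      (‖y‖ ^ (α - 2) / (1 + ‖y‖ ^ α) ^ 2) * ((1 - ‖y‖ ^ α) / (1 + ‖y‖ ^ α)) = 0 := by
  have h := MeasureTheory.integral_fun_norm_addHaar (volume : Measure (EuclideanSpace ℝ (Fin 2)))
    (fun r : ℝ => r ^ (α - 2) / (1 + r ^ α) ^ 2 * ((1 - r ^ α) / (1 + r ^ α)))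
  have hdim : Module.finrank ℝ (EuclideanSpace ℝ (Fin 2)) = 2 := finrank_euclideanSpace_fin
  rw [hdim] at h
  rw [h]
  have h1 := one_dim_integral_zero α hα
  have : ∫ r in Set.Ioi (0:ℝ), r ^ (2 - 1 : ℕ) •
      (r ^ (α - 2) / (1 + r ^ α) ^ 2 * ((1 - r ^ α) / (1 + r ^ α))) = 0 := by
    simpa [smul_eq_mul] using h1
  rw [this]
  simp
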